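/- If G1 and G2 are distribution functions of nonnegative random variables, each with mean g1 and second moment g2, then sup_{s≥0} |Ĝ1(s) - Ĝ2(s)| ≤ 1 - g1²/g2. -/

import Mathlib

open MeasureTheory Set

lemma exp_sub_eq_tsum (w : ℝ) :
    Real.exp w - 1 - w = ∑' n : ℕ, w ^ (n + 2) / (Nat.factorial (n + 2) : ℝ) := by
  have hs := Real.summable_pow_div_factorial w
  have h0 : Real.exp w = ∑' n : ℕ, w ^ n / (Nat.factorial n : ℝ) := by
    rw [Real.exp_eq_exp_ℝ, NormedSpace.exp_eq_tsum_div]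
  rw [h0, Summable.tsum_eq_zero_add hs, Summable.tsum_eq_zero_add ((summable_nat_add_iff 1).2 hs)]
  simp [Nat.factorial]

lemma exp_le_quadratic_of_nonpos {w : ℝ} (hw : w ≤ 0) :
    Real.exp w ≤ 1 + w + w ^ 2 / 2 := by
  have hF : ∀ u : ℝ, HasDerivAt (fun u => (1 - u + u ^ 2 / 2) * Real.exp u)
      (u ^ 2 / 2 * Real.exp u) u := by
    intro u
    have h1 : HasDerivAt (fun u : ℝ => 1 - u + u ^ 2 / 2) (0 - 1 + (2 : ℕ) * u ^ 1 / 2) u :=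
      (((hasDerivAt_const u (1 : ℝ)).sub (hasDerivAt_id u)).add
        ((hasDerivAt_pow 2 u).div_const 2))
    have := h1.fun_mul (Real.hasDerivAt_exp u)
    exact this.congr_deriv (by push_cast; ring)
  have hmono : Monotone (fun u : ℝ => (1 - u + u ^ 2 / 2) * Real.exp u) := by
    apply monotone_of_deriv_nonneg
    · exact fun u => (hF u).differentiableAt
    · intro u
      rw [(hF u).deriv]
      positivity
  have h0 := hmono (show (0:ℝ) ≤ -w by linarith)
  simp only [Real.exp_zero] at h0
  have h0' : 1 ≤ (1 + w + w ^ 2 / 2) * Real.exp (-w) := by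
    have : (1 - -w + (-w) ^ 2 / 2) = 1 + w + w ^ 2 / 2 := by ring
    rw [this] at h0
    simpa using h0
  rw [Real.exp_neg] at h0'
  rw [← mul_le_mul_iff_left₀ (show (0:ℝ) < (Real.exp w)⁻¹ by positivity)]
  simpa [Real.exp_ne_zero] using h0'

lemma key_pointwise {t v : ℝ} (ht : 0 ≤ t) (hv : v ≤ 1) :
    Real.exp (t * v) ≤ 1 + t * v + v ^ 2 * (Real.exp t - 1 - t) := by
  rcases le_or_gt 0 v with h0 | h0
  · have hsum1 : Summable (fun n : ℕ => (t * v) ^ (n + 2) / (Nat.factorial (n + 2) : ℝ)) :=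
      (summable_nat_add_iff 2).2 (Real.summable_pow_div_factorial (t * v))
    have hsum2 : Summable (fun n : ℕ => v ^ 2 * (t ^ (n + 2) / (Nat.factorial (n + 2) : ℝ))) :=
      ((summable_nat_add_iff 2).2 (Real.summable_pow_div_factorial t)).mul_left _
    have hterm : ∀ n : ℕ, (t * v) ^ (n + 2) / (Nat.factorial (n + 2) : ℝ) ≤ v ^ 2 * (t ^ (n + 2) / (Nat.factorial (n + 2) : ℝ)) := by
      intro n
      rw [mul_pow]
      rw [div_le_iff₀ (by positivity : (0:ℝ) < ((Nat.factorial (n + 2) : ℝ) : ℝ))]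
      have hvp : v ^ (n + 2) ≤ v ^ 2 := pow_le_pow_of_le_one h0 hv (by omega)
      have htp : (0:ℝ) ≤ t ^ (n + 2) := by positivity
      calc t ^ (n+2) * v ^ (n+2) ≤ t ^ (n+2) * v ^ 2 := by
            exact mul_le_mul_of_nonneg_left hvp htp
        _ = v ^ 2 * (t ^ (n + 2) / (Nat.factorial (n + 2) : ℝ)) * (Nat.factorial (n + 2) : ℝ) := by
            field_simp
    have h1 := exp_sub_eq_tsum (t * v)
    have h2 : v ^ 2 * (Real.exp t - 1 - t) = ∑' n : ℕ, v ^ 2 * (t ^ (n + 2) / (Nat.factorial (n + 2) : ℝ)) := by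
      rw [exp_sub_eq_tsum t, tsum_mul_left]
    have := Summable.tsum_le_tsum hterm hsum1 hsum2
    linarith [h1 ▸ this, h2 ▸ le_refl (v ^ 2 * (Real.exp t - 1 - t))]
  · have hw : t * v ≤ 0 := mul_nonpos_of_nonneg_of_nonpos ht h0.le
    have hq := exp_le_quadratic_of_nonpos hw
    have h2 : 1 + t + t ^ 2 / 2 ≤ Real.exp t := Real.quadratic_le_exp_of_nonneg ht
    nlinarith [sq_nonneg v, sq_nonneg (t*v)]

lemma ae_nonneg_of_Iio {G : Measure ℝ} (hG : G (Set.Iio 0) = 0) : ∀ᵐ x ∂G, 0 ≤ x := by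
  rw [ae_iff]
  convert hG using 2
  ext x
  simp [not_le]

lemma exp_integrable (G : Measure ℝ) [IsProbabilityMeasure G] (hG : G (Set.Iio 0) = 0)
    {s : ℝ} (hs : 0 ≤ s) : Integrable (fun x => Real.exp (-s * x)) G := by
  refine (integrable_const (1 : ℝ)).mono' ?_ ?_
  · exact (Real.continuous_exp.comp (continuous_const.mul continuous_id)).aestronglyMeasurable
  · filter_upwards [ae_nonneg_of_Iio hG] with x hx
    rw [Real.norm_eq_abs, abs_of_pos (Real.exp_pos _)]
    exact Real.exp_le_one_iff.2 (by nlinarith)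

lemma sq_mean_le_sec (G : Measure ℝ) [IsProbabilityMeasure G]
    {g1 g2 : ℝ}
    (h1 : Integrable (fun x => x) G) (h2 : Integrable (fun x => x ^ 2) G)
    (hm : ∫ x, x ∂G = g1) (hsec : ∫ x, x ^ 2 ∂G = g2) : g1 ^ 2 ≤ g2 := by
  have hint : Integrable (fun x => (x - g1) ^ 2) G := by
    have : Integrable (fun x => x ^ 2 - (2 * g1) * x + g1 ^ 2) G :=
      (h2.sub (h1.const_mul (2 * g1))).add (integrable_const _)
    convert this using 2 with x
    ring
  have h0 : 0 ≤ ∫ x, (x - g1) ^ 2 ∂G := integral_nonneg fun x => sq_nonneg _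
  have heq : ∫ x, (x - g1) ^ 2 ∂G = g2 - 2 * g1 * g1 + g1 ^ 2 := by
    have : ∫ x, (x - g1) ^ 2 ∂G = ∫ x, (x ^ 2 - (2 * g1) * x + g1 ^ 2) ∂G := by
      congr 1 with x; ring
    have eA : ∫ x, (x ^ 2 - 2 * g1 * x + g1 ^ 2) ∂G
        = (∫ x, (x ^ 2 - 2 * g1 * x) ∂G) + ∫ _x, (g1 ^ 2 : ℝ) ∂G :=
      integral_add (h2.sub (h1.const_mul (2 * g1))) (integrable_const _)
    have eB : ∫ x, (x ^ 2 - 2 * g1 * x) ∂G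
        = (∫ x, x ^ 2 ∂G) - ∫ x, 2 * g1 * x ∂G :=
      integral_sub h2 (h1.const_mul (2 * g1))
    have eC : ∫ x, 2 * g1 * x ∂G = 2 * g1 * ∫ x, x ∂G := integral_const_mul _ _
    have eD : ∫ _x, (g1 ^ 2 : ℝ) ∂G = g1 ^ 2 := by simp
    rw [this, eA, eB, eC, eD, hm, hsec]
  nlinarith [heq ▸ h0]

lemma lst_lower (G : Measure ℝ) [IsProbabilityMeasure G] (hG : G (Set.Iio 0) = 0)
    {g1 s : ℝ} (hs : 0 ≤ s)
    (h1 : Integrable (fun x => x) G) (hm : ∫ x, x ∂G = g1) :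
    Real.exp (-s * g1) ≤ ∫ x, Real.exp (-s * x) ∂G := by
  have hpt : ∀ x : ℝ, Real.exp (-s * g1) * (1 + (s * g1 - s * x)) ≤ Real.exp (-s * x) := by
    intro x
    have h := Real.add_one_le_exp (s * g1 - s * x)
    calc Real.exp (-s * g1) * (1 + (s * g1 - s * x))
        ≤ Real.exp (-s * g1) * Real.exp (s * g1 - s * x) := by
          apply mul_le_mul_of_nonneg_left _ (Real.exp_pos _).le
          linarith
      _ = Real.exp (-s * x) := by rw [← Real.exp_add]; ring_nf
  have hintL : Integrable (fun x => Real.exp (-s * g1) * (1 + (s * g1 - s * x))) G := by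
    have : Integrable (fun x => Real.exp (-s * g1) * (1 + s * g1) - (Real.exp (-s * g1) * s) * x) G :=
      (integrable_const _).sub (h1.const_mul _)
    convert this using 2 with x
    ring
  have hmono := integral_mono hintL (exp_integrable G hG hs) hpt
  have hcalc : ∫ x, Real.exp (-s * g1) * (1 + (s * g1 - s * x)) ∂G = Real.exp (-s * g1) := by
    have e0 : ∀ x : ℝ, Real.exp (-s * g1) * (1 + (s * g1 - s * x))
        = Real.exp (-s * g1) * (1 + s * g1) - (Real.exp (-s * g1) * s) * x := fun x => by ring
    simp_rw [e0]
    rw [integral_sub (integrable_const _) (h1.const_mul _)]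
    have eC : ∫ a, Real.exp (-s * g1) * s * a ∂G = Real.exp (-s * g1) * s * ∫ a, a ∂G :=
      integral_const_mul _ _
    rw [eC, hm, integral_const]
    simp [measure_univ]
    ring
  linarith [hcalc ▸ hmono]

lemma lst_upper (G : Measure ℝ) [IsProbabilityMeasure G] (hG : G (Set.Iio 0) = 0)
    {g1 g2 s : ℝ} (hg1 : 0 < g1) (hg2 : g1 ^ 2 ≤ g2) (hs : 0 ≤ s)
    (h1 : Integrable (fun x => x) G) (h2 : Integrable (fun x => x ^ 2) G)
    (hm : ∫ x, x ∂G = g1) (hsec : ∫ x, x ^ 2 ∂G = g2) :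
    ∫ x, Real.exp (-s * x) ∂G
      ≤ (1 - g1 ^ 2 / g2) + (g1 ^ 2 / g2) * Real.exp (-(g2 / g1) * s) := by
  have hg2pos : 0 < g2 := lt_of_lt_of_le (by positivity) hg2
  set c : ℝ := g2 / g1 with hc
  have hcpos : 0 < c := by positivity
  set t : ℝ := s * c with htdef
  have ht : 0 ≤ t := by positivity
  set A : ℝ := Real.exp t - 1 - t with hA
  set a : ℝ := Real.exp (-t) * (1 + t + A) with ha
  set b : ℝ := Real.exp (-t) * (-(t / c) - 2 * A / c) with hb
  set d : ℝ := Real.exp (-t) * (A / c ^ 2) with hd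
  have hpt : ∀ᵐ x ∂G, Real.exp (-s * x) ≤ a + b * x + d * x ^ 2 := by
    filter_upwards [ae_nonneg_of_Iio hG] with x hx
    have hkey := key_pointwise ht (show 1 - x / c ≤ 1 by
      have : 0 ≤ x / c := by positivity
      linarith)
    have htv : t * (1 - x / c) = t - s * x := by
      field_simp [htdef]
      ring
    have hexp : Real.exp (-s * x) = Real.exp (t * (1 - x / c)) * Real.exp (-t) := by
      rw [← Real.exp_add, htv]; ring_nf
    rw [hexp]
    calc Real.exp (t * (1 - x / c)) * Real.exp (-t)
        ≤ (1 + t * (1 - x / c) + (1 - x / c) ^ 2 * A) * Real.exp (-t) :=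
          mul_le_mul_of_nonneg_right hkey (Real.exp_pos _).le
      _ = a + b * x + d * x ^ 2 := by
          rw [ha, hb, hd]
          field_simp
          ring
  have hintQ : Integrable (fun x => a + b * x + d * x ^ 2) G :=
    ((integrable_const a).add (h1.const_mul b)).add (h2.const_mul d)
  have hmono := integral_mono_ae (exp_integrable G hG hs) hintQ hpt
  have hcalc : ∫ x, (a + b * x + d * x ^ 2) ∂G = a + b * g1 + d * g2 := by
    have eAdd1 : ∫ x, (a + b * x + d * x ^ 2) ∂G
        = (∫ x, (a + b * x) ∂G) + ∫ x, d * x ^ 2 ∂G :=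
      integral_add ((integrable_const a).add (h1.const_mul b)) (h2.const_mul d)
    have eAdd2 : ∫ x, (a + b * x) ∂G = (∫ _x, a ∂G) + ∫ x, b * x ∂G :=
      integral_add (integrable_const a) (h1.const_mul b)
    rw [eAdd1, eAdd2]
    have e1 : ∫ x, b * x ∂G = b * ∫ x, x ∂G := integral_const_mul _ _
    have e2 : ∫ x, d * x ^ 2 ∂G = d * ∫ x, x ^ 2 ∂G := integral_const_mul _ _
    rw [e1, e2, hm, hsec, integral_const]
    simp [measure_univ]
  have hfin : a + b * g1 + d * g2 = (1 - g1 ^ 2 / g2) + (g1 ^ 2 / g2) * Real.exp (-(g2 / g1) * s) := by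
    have hts : -(g2 / g1) * s = -t := by rw [htdef, hc]; ring
    rw [hts, ha, hb, hd, hA, hc, Real.exp_neg]
    have hE := Real.exp_ne_zero t
    field_simp
    ring
  calc ∫ x, Real.exp (-s * x) ∂G ≤ ∫ x, (a + b * x + d * x ^ 2) ∂G := hmono
    _ = _ := by rw [hcalc, hfin]

/-- If `G1` and `G2` are laws of nonnegative random variables, each with mean `g1`
and second moment `g2`, then `sup_{s ≥ 0} |Ĝ1 s - Ĝ2 s| ≤ 1 - g1²/g2`. -/
theorem lst_dist_le_of_same_moments
    (G1 G2 : Measure ℝ) [IsProbabilityMeasure G1] [IsProbabilityMeasure G2]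
    (hG1 : G1 (Set.Iio 0) = 0) (hG2 : G2 (Set.Iio 0) = 0)
    (g1 g2 : ℝ) (hg1 : 0 < g1)
    (hint11 : Integrable (fun x => x) G1) (hint12 : Integrable (fun x => x ^ 2) G1)
    (hint21 : Integrable (fun x => x) G2) (hint22 : Integrable (fun x => x ^ 2) G2)
    (hmean1 : ∫ x, x ∂G1 = g1) (hsec1 : ∫ x, x ^ 2 ∂G1 = g2)
    (hmean2 : ∫ x, x ∂G2 = g1) (hsec2 : ∫ x, x ^ 2 ∂G2 = g2) :
    ∀ s ≥ (0 : ℝ),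
      |(∫ x, Real.exp (-s * x) ∂G1) - ∫ x, Real.exp (-s * x) ∂G2| ≤ 1 - g1 ^ 2 / g2 := by
  intro s hs
  have hg2 : g1 ^ 2 ≤ g2 := sq_mean_le_sec G1 hint11 hint12 hmean1 hsec1
  have hg2pos : 0 < g2 := lt_of_lt_of_le (by positivity) hg2
  have hl1 := lst_lower G1 hG1 hs hint11 hmean1
  have hl2 := lst_lower G2 hG2 hs hint21 hmean2
  have hu1 := lst_upper G1 hG1 hg1 hg2 hs hint11 hint12 hmean1 hsec1
  have hu2 := lst_upper G2 hG2 hg1 hg2 hs hint21 hint22 hmean2 hsec2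
  have hexp : Real.exp (-(g2 / g1) * s) ≤ Real.exp (-s * g1) := by
    apply Real.exp_le_exp.2
    have hgl : g1 ≤ g2 / g1 := by
      rw [le_div_iff₀ hg1]
      nlinarith
    nlinarith
  have hp1 : g1 ^ 2 / g2 ≤ 1 := (div_le_one hg2pos).2 hg2
  have hp0 : 0 ≤ g1 ^ 2 / g2 := by positivity
  have hkey : g1 ^ 2 / g2 * Real.exp (-(g2 / g1) * s) ≤ Real.exp (-s * g1) := by
    calc g1 ^ 2 / g2 * Real.exp (-(g2 / g1) * s) ≤ 1 * Real.exp (-(g2 / g1) * s) :=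
        mul_le_mul_of_nonneg_right hp1 (Real.exp_pos _).le
      _ = Real.exp (-(g2 / g1) * s) := one_mul _
      _ ≤ Real.exp (-s * g1) := hexp
  rw [abs_le]
  constructor <;> linarith
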